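/- Let R be an algebraic curvature tensor on (ℝ⁴,g,S) satisfying R(Sx,Sy,Sz,Su)=R(x,y,z,u), with g the skew-circulant metric with first row (A,B,0,−B), A²−2B²≠0. Then the Ricci tensor ρ(y,z) = Σ g^{ij} R(e_i,y,z,e_j) satisfies ρ₁₁ = ρ₂₂ = ρ₃₃ = ρ₄₄, ρ₁₂ = ρ₂₃ = ρ₃₄ = −ρ₁₄, and ρ₁₃ = ρ₂₄ = 0. -/

import Mathlib

noncomputable def sgn3 (i : Fin 4) : ℝ := if i = 3 then -1 else 1
noncomputable def sgn0 (i : Fin 4) : ℝ := if i = 0 then -1 else 1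

lemma sgn0_succ (i : Fin 4) : sgn0 (i + 1) = sgn3 i := by
  fin_cases i <;> simp [sgn0, sgn3]

lemma collapse1 (f : Fin 4 → ℝ) (i : Fin 4) :
    (∑ a, f a * (!![0, 1, 0, 0; 0, 0, 1, 0; 0, 0, 0, 1; -1, 0, 0, 0] : Matrix (Fin 4) (Fin 4) ℝ) a i)
      = sgn0 i * f (i - 1) := by
  fin_cases i <;>
    simp [Fin.sum_univ_four, sgn0, Matrix.vecHead, Matrix.vecTail,
      show ((0 : Fin 4) - 1) = 3 from rfl, show ((1 : Fin 4) - 1) = 0 from rfl,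
      show ((2 : Fin 4) - 1) = 1 from rfl, show ((3 : Fin 4) - 1) = 2 from rfl]

lemma sumshift4 (f : Fin 4 → Fin 4 → ℝ) :
    (∑ i, ∑ l, f (i + 1) (l + 1)) = ∑ i, ∑ l, f i l := by
  simp [Fin.sum_univ_four]
  ring

set_option maxHeartbeats 1600000 in
theorem ricci_components_of_S_invariant_curvature
    (A B : ℝ) (hAB : A ^ 2 - 2 * B ^ 2 ≠ 0)
    (S G : Matrix (Fin 4) (Fin 4) ℝ)
    (hS : S = !![0, 1, 0, 0; 0, 0, 1, 0; 0, 0, 0, 1; -1, 0, 0, 0])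
    (hG : G = !![A, B, 0, -B; B, A, B, 0; 0, B, A, B; -B, 0, B, A])
    (R : Fin 4 → Fin 4 → Fin 4 → Fin 4 → ℝ)
    (hanti1 : ∀ i j k h, R i j k h = -R j i k h)
    (hanti2 : ∀ i j k h, R i j k h = -R i j h k)
    (hpair : ∀ i j k h, R i j k h = R k h i j)
    (hbianchi : ∀ i j k h, R i j k h + R j k i h + R k i j h = 0)
    (hinv : ∀ i j k h, (∑ a, ∑ b, ∑ c, ∑ d,
        R a b c d * S a i * S b j * S c k * S d h) = R i j k h)
    (ρ : Fin 4 → Fin 4 → ℝ)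
    (hρ : ∀ j k, ρ j k = ∑ i, ∑ l, G⁻¹ i l * R i j k l) :
    (ρ 0 0 = ρ 1 1 ∧ ρ 1 1 = ρ 2 2 ∧ ρ 2 2 = ρ 3 3) ∧
    (ρ 0 1 = ρ 1 2 ∧ ρ 1 2 = ρ 2 3 ∧ ρ 2 3 = -ρ 0 3) ∧
    (ρ 0 2 = 0 ∧ ρ 1 3 = 0) := by
  subst hS hG
  set Sm : Matrix (Fin 4) (Fin 4) ℝ := !![0, 1, 0, 0; 0, 0, 1, 0; 0, 0, 0, 1; -1, 0, 0, 0] with hSm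
  set Gm : Matrix (Fin 4) (Fin 4) ℝ := !![A, B, 0, -B; B, A, B, 0; 0, B, A, B; -B, 0, B, A] with hGm
  -- matrix identities
  have hSSt : Sm * Sm.transpose = 1 := by
    ext i j
    fin_cases i <;> fin_cases j <;>
      simp [hSm, Matrix.mul_apply, Fin.sum_univ_four, Matrix.vecHead, Matrix.vecTail,
        Matrix.one_apply]
  have hStS : Sm.transpose * Sm = 1 := by
    ext i j
    fin_cases i <;> fin_cases j <;>
      simp [hSm, Matrix.mul_apply, Fin.sum_univ_four, Matrix.vecHead, Matrix.vecTail,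
        Matrix.one_apply]
  have hGS : Sm * Gm * Sm.transpose = Gm := by
    ext i j
    fin_cases i <;> fin_cases j <;>
      simp [hSm, hGm, Matrix.mul_apply, Fin.sum_univ_four, Matrix.vecHead, Matrix.vecTail]
  have hSinv : Sm⁻¹ = Sm.transpose := Matrix.inv_eq_right_inv hSSt
  have hStinv : Sm.transpose⁻¹ = Sm := Matrix.inv_eq_right_inv hStS
  have hSH : Sm * Gm⁻¹ * Sm.transpose = Gm⁻¹ := by
    have h1 : (Sm * Gm * Sm.transpose)⁻¹ = Sm * Gm⁻¹ * Sm.transpose := by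
      rw [Matrix.mul_inv_rev, Matrix.mul_inv_rev, hSinv, hStinv, Matrix.mul_assoc]
    rw [← h1, hGS]
  -- entrywise shift relation for G⁻¹
  have hHs : ∀ i l : Fin 4, Gm⁻¹ i l = sgn3 i * sgn3 l * Gm⁻¹ (i + 1) (l + 1) := by
    intro i l
    have h := congrFun (congrFun hSH i) l
    fin_cases i <;> fin_cases l <;>
      · simp [hSm, Matrix.mul_apply, Fin.sum_univ_four, Matrix.vecHead, Matrix.vecTail,
          Matrix.vecMul, dotProduct] at h
        simp [sgn3]
        linarith
  -- symmetry of G⁻¹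
  have hGsym : Gm.transpose = Gm := by
    ext i j
    fin_cases i <;> fin_cases j <;> simp [hGm, Matrix.vecHead, Matrix.vecTail]
  have hHsym : ∀ i l : Fin 4, Gm⁻¹ i l = Gm⁻¹ l i := by
    intro i l
    have := Gm.transpose_nonsing_inv
    rw [hGsym] at this
    conv_lhs => rw [← this]
    rfl
  -- shift relation for R
  have hRshift : ∀ i j k h : Fin 4, R i j k h
      = sgn0 i * sgn0 j * sgn0 k * sgn0 h * R (i - 1) (j - 1) (k - 1) (h - 1) := by
    intro i j k h
    have h0 := hinv i j k h
    simp only [hSm, ← mul_assoc, collapse1] at h0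
    linear_combination - h0
  -- symmetry of ρ
  have hρsym : ∀ j k, ρ j k = ρ k j := by
    intro j k
    have hRsym : ∀ i l, R i k j l = R l j k i := by
      intro i l
      rw [hpair i k j l, hanti1 j l i k, hanti2 l j i k]
      ring
    calc ρ j k = ∑ i, ∑ l, Gm⁻¹ i l * R i j k l := hρ j k
      _ = ∑ i, ∑ l, Gm⁻¹ l i * R l k j i := by
          refine Finset.sum_congr rfl fun i _ => Finset.sum_congr rfl fun l _ => ?_
          rw [hHsym i l, hRsym l i]
      _ = ∑ l, ∑ i, Gm⁻¹ l i * R l k j i := Finset.sum_comm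
      _ = ρ k j := (hρ k j).symm
  -- shift relation for ρ
  have hstep : ∀ j k : Fin 4, ρ (j + 1) (k + 1) = sgn3 j * sgn3 k * ρ j k := by
    intro j k
    rw [hρ, hρ, ← sumshift4 (fun i l => Gm⁻¹ i l * R i (j + 1) (k + 1) l), Finset.mul_sum]
    refine Finset.sum_congr rfl fun i _ => ?_
    rw [Finset.mul_sum]
    refine Finset.sum_congr rfl fun l _ => ?_
    have a := hRshift (i + 1) (j + 1) (k + 1) (l + 1)
    simp only [add_sub_cancel_right, sgn0_succ] at a
    rw [a, hHs i l]
    ring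
  have h00 : ρ 1 1 = ρ 0 0 := by have := hstep 0 0; simpa [sgn3] using this
  have h11 : ρ 2 2 = ρ 1 1 := by have := hstep 1 1; simpa [sgn3] using this
  have h22 : ρ 3 3 = ρ 2 2 := by have := hstep 2 2; simpa [sgn3] using this
  have h01 : ρ 1 2 = ρ 0 1 := by have := hstep 0 1; simpa [sgn3] using this
  have h12 : ρ 2 3 = ρ 1 2 := by have := hstep 1 2; simpa [sgn3] using this
  have h30 : ρ 0 1 = -ρ 3 0 := by have := hstep 3 0; simpa [sgn3] using this
  have h02 : ρ 1 3 = ρ 0 2 := by have := hstep 0 2; simpa [sgn3] using this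
  have h13 : ρ 2 0 = -ρ 1 3 := by have := hstep 1 3; simpa [sgn3] using this
  have hs30 : ρ 3 0 = ρ 0 3 := hρsym 3 0
  have hs20 : ρ 2 0 = ρ 0 2 := hρsym 2 0
  have hz : ρ 0 2 = 0 := by linarith
  refine ⟨⟨h00.symm, h11.symm, h22.symm⟩, ⟨h01.symm, h12.symm, ?_⟩, hz, by linarith⟩
  rw [h12, h01, h30, hs30]
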